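/- arXiv:2302.03643 — 4 statements merged into one kernel-verified Lean document; each statement's English description precedes it below -/
import Mathlib

section
/- Let α be a snowy weak composition. Then for every r ≥ 1, rajcode(α)_r = α_r + |{r' > r : α_r < α_{r'}}|. -/
open scoped Classical

noncomputable section

/-- A weak composition: a finitely supported sequence of naturals.  Indices are
thought of as positive integers; index `0` is required to satisfy `α 0 = 0`. -/
abbrev WeakComp := ℕ →₀ ℕ

/-- A weak composition is snowy if its positive entries are pairwise distinct. -/
def Snowy (α : WeakComp) : Prop :=
  ∀ r r', 0 < α r → α r = α r' → r = r'

/-- The key diagram of a weak composition: the left-justified diagram with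
`α r` cells in row `r` (columns `1, …, α r`). -/
def keyDiagram (α : WeakComp) : Finset (ℕ × ℕ) :=
  α.support.biUnion fun r => (Finset.Icc 1 (α r)).image fun c => (r, c)

/-- Largest row index occurring in a diagram. -/
def rowBound (D : Finset (ℕ × ℕ)) : ℕ := (D.image Prod.fst).sup id

/-- One step of the snow-diagram algorithm: in row `r`, mark as a dark cloud the
rightmost cell of `D` whose column contains no dark cloud of `S` yet. -/
def darkStep (D S : Finset (ℕ × ℕ)) (r : ℕ) : Finset (ℕ × ℕ) :=
  let cols := (D.filter fun p => p.1 = r ∧ ∀ q ∈ S, q.2 ≠ p.2).image Prod.snd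
  if h : cols.Nonempty then insert (r, cols.max' h) S else S

/-- Process rows `N, N-1, …, N-k+1` from bottom to top. -/
def darkAux (D : Finset (ℕ × ℕ)) (N : ℕ) : ℕ → Finset (ℕ × ℕ)
  | 0 => ∅
  | k + 1 => darkStep D (darkAux D N k) (N - k)

/-- The dark cloud diagram of a diagram `D`: iterate the rows of `D` from bottom
to top, marking in each row the rightmost cell whose column contains no dark
cloud from a lower row. -/
def dark (D : Finset (ℕ × ℕ)) : Finset (ℕ × ℕ) := darkAux D (rowBound D) (rowBound D)

/-- The underlying diagram of the snow diagram of `D`: the cells of `D` together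
with all (snowflake) positions above a dark cloud in its column. -/
def snow (D : Finset (ℕ × ℕ)) : Finset (ℕ × ℕ) :=
  D ∪ (dark D).biUnion fun p => (Finset.Icc 1 p.1).image fun r => (r, p.2)

/-- `rajcode` of a diagram: the number of cells in row `r` of its snow diagram. -/
def rajcodeD (D : Finset (ℕ × ℕ)) (r : ℕ) : ℕ :=
  ((snow D).filter fun p => p.1 = r).card

/-- `raj` of a diagram: the total number of cells of its snow diagram. -/
def rajD (D : Finset (ℕ × ℕ)) : ℕ := (snow D).card

/-- `rajcode` of a weak composition. -/
def rajcode (α : WeakComp) (r : ℕ) : ℕ := rajcodeD (keyDiagram α) r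

/-- `raj` of a weak composition. -/
def raj (α : WeakComp) : ℕ := rajD (keyDiagram α)

/-- Non-attacking rook diagram: a finite subset of `ℤ_{>0} × ℤ_{>0}` with at
most one cell in each row and at most one cell in each column. -/
def IsRook (R : Finset (ℕ × ℕ)) : Prop :=
  (∀ p ∈ R, 1 ≤ p.1 ∧ 1 ≤ p.2) ∧
    ∀ p ∈ R, ∀ q ∈ R, (p.1 = q.1 ∨ p.2 = q.2) → p = q

/-- The sum `|α|` of the entries of a weak composition. -/
def wsum (α : WeakComp) : ℕ := α.sum fun _ v => v

/-- The number of pairs `(r, r')` with `1 ≤ r < r'` and `α r < α r'`. -/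
def invCount (α : WeakComp) : ℕ :=
  ((Finset.Icc 1 (α.support.sup id) ×ˢ α.support).filter fun p =>
      p.1 < p.2 ∧ α p.1 < α p.2).card

/-- Swap entries `i` and `i+1` of a weak composition. -/
def swapEntries (i : ℕ) (α : WeakComp) : WeakComp :=
  Finsupp.equivMapDomain (Equiv.swap i (i + 1)) α

/-- The Rothe diagram of `w ∈ S_n`, in 1-based coordinates:
`{(r, w(r')) : r < r', w(r) > w(r')}`. -/
def rothe {n : ℕ} (w : Equiv.Perm (Fin n)) : Finset (ℕ × ℕ) :=
  (Finset.univ.filter fun p : Fin n × Fin n => p.1 < p.2 ∧ w p.2 < w p.1).image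
    fun p => ((p.1 : ℕ) + 1, (w p.2 : ℕ) + 1)

/-- Length of the longest increasing subsequence of `w` starting at position `r`
(equivalently, starting with the value `w r`). -/
def LISfrom {n : ℕ} (w : Equiv.Perm (Fin n)) (r : Fin n) : ℕ :=
  Finset.sup (Finset.univ.filter fun s : Finset (Fin n) =>
      r ∈ s ∧ (∀ i ∈ s, r ≤ i) ∧ ∀ i ∈ s, ∀ j ∈ s, i < j → w i < w j)
    Finset.card

/-- Insert `x` into a strictly decreasing row: replace the largest entry `< x`
(returning it as bumped), or append `x` at the end. -/
def insertRow : List ℕ → ℕ → List ℕ × Option ℕ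
  | [], x => ([x], none)
  | a :: t, x =>
      if a < x then (x :: t, some a)
      else (a :: (insertRow t x).1, (insertRow t x).2)

/-- The 1-based value of `w` at 0-based position `i` (0 if out of range). -/
def oneline {n : ℕ} (w : Equiv.Perm (Fin n)) (i : ℕ) : ℕ :=
  if h : i < n then (w ⟨i, h⟩ : ℕ) + 1 else 0

/-- Row one of the Schensted insertion tableau after the first `k` insertions of
the values `w(n), w(n-1), …` (1-based values, inserted from the last position). -/
def rowOneAux {n : ℕ} (w : Equiv.Perm (Fin n)) : ℕ → List ℕ
  | 0 => []
  | k + 1 => (insertRow (rowOneAux w k) (oneline w (n - 1 - k))).1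

/-- The value bumped from row one when the value `w r` is inserted (during the
Schensted insertion of `w(n), …, w(1)` into the empty tableau); `none` if `w r`
is appended at the end of row one. -/
def bumpedFromRowOne {n : ℕ} (w : Equiv.Perm (Fin n)) (r : Fin n) : Option ℕ :=
  (insertRow (rowOneAux w (n - 1 - (r : ℕ))) (oneline w (r : ℕ))).2

/-- Position `i` starts a maximal decreasing run of `u` (in one-line notation). -/
def IsRunStart {n : ℕ} (u : Equiv.Perm (Fin n)) (i : Fin n) : Prop :=
  ∀ j : Fin n, (j : ℕ) + 1 = (i : ℕ) → u j < u i

/-- A fireworks permutation: the initial elements of its maximal decreasing runs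
are increasing. -/
def Fireworks {n : ℕ} (u : Equiv.Perm (Fin n)) : Prop :=
  ∀ i j : Fin n, IsRunStart u i → IsRunStart u j → i < j → u i < u j

/-- An inverse fireworks permutation. -/
def InverseFireworks {n : ℕ} (w : Equiv.Perm (Fin n)) : Prop := Fireworks w⁻¹

/-- The `n`-th Bell number: the number of set partitions (equivalence relations)
of an `n`-element set. -/
def bell (n : ℕ) : ℕ := Nat.card (Setoid (Fin n))

/-- The staircase board `Stair_n = {(r,c) : 1 ≤ r ≤ n-1, 1 ≤ c ≤ n-r}`. -/
def stair (n : ℕ) : Finset (ℕ × ℕ) :=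
  (Finset.Icc 1 n ×ˢ Finset.Icc 1 n).filter fun p => p.1 ≤ n - 1 ∧ p.2 ≤ n - p.1

/-- All cells weakly above a rook of `R` in its column, or weakly to the left of
a rook of `R` in its row. -/
def hooks (R : Finset (ℕ × ℕ)) : Finset (ℕ × ℕ) :=
  R.biUnion fun p =>
    ((Finset.Icc 1 p.1).image fun r => (r, p.2)) ∪
      ((Finset.Icc 1 p.2).image fun c => (p.1, c))

/-- The Northwest number `NW(R)`. -/
def NW (R : Finset (ℕ × ℕ)) : ℕ := (hooks R).card

/-- The Garsia–Remmel statistic: the number of cells of `Stair_n` that are not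
weakly above a rook in its column and not weakly to the left of a rook in its
row. -/
def GRcount (n : ℕ) (R : Finset (ℕ × ℕ)) : ℕ :=
  ((stair n).filter fun q =>
      ¬ ∃ p ∈ R, (p.2 = q.2 ∧ q.1 ≤ p.1) ∨ (p.1 = q.1 ∧ q.2 ≤ p.2)).card

/-- Garsia–Remmel `q`-Stirling numbers of the second kind. -/
def qStirling : ℕ → ℕ → Polynomial ℤ
  | 0, 0 => 1
  | 0, _ + 1 => 0
  | _ + 1, 0 => 0
  | n + 1, k + 1 =>
      Polynomial.X ^ k * qStirling n k +
        (∑ i ∈ Finset.range (k + 1), Polynomial.X ^ i) * qStirling n (k + 1)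

/-- The `q`-Bell polynomial `B_n(q) = Σ_{k=0}^n S_{n,k}(q)`. -/
def qBell (n : ℕ) : Polynomial ℤ := ∑ k ∈ Finset.range (n + 1), qStirling n k

/-- Tail lexicographic order on exponent vectors: `γ < α` iff there is `k` with
`γ k < α k` and `γ j = α j` for all `j > k`. -/
def TailLt (γ α : ℕ →₀ ℕ) : Prop :=
  ∃ k, γ k < α k ∧ ∀ j, k < j → γ j = α j


lemma mem_keyDiagram (α : WeakComp) (p : ℕ × ℕ) :
    p ∈ keyDiagram α ↔ 1 ≤ p.2 ∧ p.2 ≤ α p.1 := by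
  simp only [keyDiagram, Finset.mem_biUnion, Finset.mem_image, Finset.mem_Icc,
    Finsupp.mem_support_iff]
  constructor
  · rintro ⟨s, hs, c, ⟨h1, h2⟩, rfl⟩
    exact ⟨h1, h2⟩
  · rintro ⟨h1, h2⟩
    exact ⟨p.1, by omega, p.2, ⟨h1, h2⟩, rfl⟩

lemma le_rowBound_key (α : WeakComp) {s : ℕ} (hsupp : s ∈ α.support) :
    s ≤ rowBound (keyDiagram α) := by
  rw [Finsupp.mem_support_iff] at hsupp
  have hmem : (s, α s) ∈ keyDiagram α := by
    rw [mem_keyDiagram]; exact ⟨by omega, le_rfl⟩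
  exact Finset.le_sup (f := id) (Finset.mem_image_of_mem Prod.fst hmem)

lemma darkAux_key (α : WeakComp) (h0 : α 0 = 0) (hs : Snowy α) :
    ∀ k, k ≤ rowBound (keyDiagram α) →
      darkAux (keyDiagram α) (rowBound (keyDiagram α)) k =
        (α.support.filter fun s => rowBound (keyDiagram α) - k < s).image
          fun s => (s, α s) := by
  set D := keyDiagram α with hD
  set N := rowBound D with hN
  intro k
  induction k with
  | zero =>
    intro _
    rw [darkAux]
    symm
    rw [Finset.image_eq_empty, Finset.filter_eq_empty_iff]
    intro s hsupp
    simp only [Nat.sub_zero, not_lt]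
    exact le_rowBound_key α hsupp
  | succ k ih =>
    intro hk
    have hk' : k ≤ N := le_of_lt hk
    have ihs := ih hk'
    rw [darkAux, ihs]
    set r0 := N - k with hr0
    have hr0pos : 1 ≤ r0 := by omega
    have hsub : N - (k + 1) = r0 - 1 := by omega
    set S := (α.support.filter fun s => r0 < s).image (fun s => (s, α s)) with hS
    have hSmem : ∀ q ∈ S, ∃ s, α s ≠ 0 ∧ r0 < s ∧ q = (s, α s) := by
      intro q hq
      simp only [hS, Finset.mem_image, Finset.mem_filter, Finsupp.mem_support_iff] at hq
      obtain ⟨s, ⟨h1, h2⟩, rfl⟩ := hq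
      exact ⟨s, h1, h2, rfl⟩
    simp only [darkStep]
    have hcols : ∀ c, c ∈ ((D.filter fun p => p.1 = r0 ∧ ∀ q ∈ S, q.2 ≠ p.2).image Prod.snd)
        ↔ ((1 ≤ c ∧ c ≤ α r0) ∧ ∀ q ∈ S, q.2 ≠ c) := by
      intro c
      simp only [Finset.mem_image, Finset.mem_filter, hD, mem_keyDiagram]
      constructor
      · rintro ⟨p, ⟨⟨hc1, hc2⟩, hp1, hp2⟩, rfl⟩
        exact ⟨⟨hc1, hp1 ▸ hc2⟩, hp2⟩
      · rintro ⟨⟨hc1, hc2⟩, hfree⟩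
        exact ⟨(r0, c), ⟨⟨hc1, hc2⟩, rfl, hfree⟩, rfl⟩
    rw [hsub]
    by_cases ha : α r0 = 0
    · have hempty : ¬ ((D.filter fun p => p.1 = r0 ∧ ∀ q ∈ S, q.2 ≠ p.2).image
          Prod.snd).Nonempty := by
        rintro ⟨c, hc⟩
        have := (hcols c).1 hc
        omega
      rw [dif_neg hempty]
      have hfil : (α.support.filter fun s => r0 - 1 < s) =
          α.support.filter fun s => r0 < s := by
        ext s
        simp only [Finset.mem_filter, Finsupp.mem_support_iff]
        constructor
        · rintro ⟨h1, h2⟩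
          have hne : s ≠ r0 := fun h => h1 (h ▸ ha)
          exact ⟨h1, by omega⟩
        · rintro ⟨h1, h2⟩
          exact ⟨h1, by omega⟩
      rw [hfil]
    · have hmax_mem : α r0 ∈ ((D.filter fun p => p.1 = r0 ∧ ∀ q ∈ S, q.2 ≠ p.2).image
          Prod.snd) := by
        rw [hcols]
        refine ⟨⟨by omega, le_rfl⟩, ?_⟩
        intro q hq
        obtain ⟨s, hs1, hs2, rfl⟩ := hSmem q hq
        intro heq
        have := hs s r0 (Nat.pos_of_ne_zero hs1) heq
        omega
      have hne : ((D.filter fun p => p.1 = r0 ∧ ∀ q ∈ S, q.2 ≠ p.2).image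
          Prod.snd).Nonempty := ⟨α r0, hmax_mem⟩
      rw [dif_pos hne]
      have hmax : Finset.max' _ hne = α r0 := by
        refine le_antisymm (Finset.max'_le _ _ _ ?_) (Finset.le_max' _ _ hmax_mem)
        intro c hc
        exact ((hcols c).1 hc).1.2
      rw [hmax]
      ext p
      simp only [Finset.mem_insert, hS, Finset.mem_image, Finset.mem_filter,
        Finsupp.mem_support_iff]
      constructor
      · rintro (rfl | ⟨s, ⟨h1, h2⟩, rfl⟩)
        · exact ⟨r0, ⟨ha, by omega⟩, rfl⟩
        · exact ⟨s, ⟨h1, by omega⟩, rfl⟩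
      · rintro ⟨s, ⟨h1, h2⟩, rfl⟩
        rcases eq_or_lt_of_le (show r0 ≤ s by omega) with rfl | hlt
        · exact Or.inl rfl
        · exact Or.inr ⟨s, ⟨h1, hlt⟩, rfl⟩

lemma dark_key (α : WeakComp) (h0 : α 0 = 0) (hs : Snowy α) :
    dark (keyDiagram α) = α.support.image fun s => (s, α s) := by
  rw [dark, darkAux_key α h0 hs _ le_rfl]
  congr 1
  ext s
  simp only [Finset.mem_filter, Finsupp.mem_support_iff, Nat.sub_self]
  constructor
  · exact fun h => h.1
  · intro h
    exact ⟨h, Nat.pos_of_ne_zero fun hs0 => h (by rw [hs0]; exact h0)⟩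

lemma mem_snow_key (α : WeakComp) (h0 : α 0 = 0) (hs : Snowy α) (p : ℕ × ℕ) :
    p ∈ snow (keyDiagram α) ↔
      (1 ≤ p.2 ∧ p.2 ≤ α p.1) ∨ ∃ s, α s ≠ 0 ∧ 1 ≤ p.1 ∧ p.1 ≤ s ∧ p.2 = α s := by
  rw [snow, Finset.mem_union, mem_keyDiagram, dark_key α h0 hs]
  apply or_congr Iff.rfl
  simp only [Finset.mem_biUnion, Finset.mem_image, Finset.mem_Icc, Finsupp.mem_support_iff]
  constructor
  · rintro ⟨q, ⟨s, hs1, rfl⟩, r', ⟨h1, h2⟩, rfl⟩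
    exact ⟨s, hs1, h1, h2, rfl⟩
  · rintro ⟨s, h1, h2, h3, h4⟩
    exact ⟨(s, α s), ⟨s, h1, rfl⟩, p.1, ⟨h2, h3⟩, by rw [← h4]⟩

/-- for snowy `α`, `rajcode(α)_r = α_r + |{r' > r : α_r < α_{r'}}|`. -/
theorem rajcode_of_snowy (α : WeakComp) (h0 : α 0 = 0) (hs : Snowy α) :
    ∀ r : ℕ, 1 ≤ r →
      rajcode α r = α r + (α.support.filter fun r' => r < r' ∧ α r < α r').card := by
  intro r hr
  rw [rajcode, rajcodeD]
  set A := (Finset.Icc 1 (α r)).image (fun c => (r, c)) with hA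
  set B := (α.support.filter fun r' => r < r' ∧ α r < α r').image (fun s => (r, α s)) with hB
  have hT : ((snow (keyDiagram α)).filter fun p => p.1 = r) = A ∪ B := by
    ext p
    obtain ⟨p1, p2⟩ := p
    simp only [Finset.mem_filter, mem_snow_key α h0 hs, Finset.mem_union, hA, hB,
      Finset.mem_image, Finset.mem_Icc, Finsupp.mem_support_iff, Prod.mk.injEq]
    constructor
    · rintro ⟨hmem, rfl⟩
      rcases hmem with ⟨h1, h2⟩ | ⟨s, hs1, hs2, hs3, rfl⟩
      · exact Or.inl ⟨p2, ⟨h1, h2⟩, rfl, rfl⟩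
      · by_cases hle : α s ≤ α p1
        · exact Or.inl ⟨α s, ⟨Nat.pos_of_ne_zero hs1, hle⟩, rfl, rfl⟩
        · refine Or.inr ⟨s, ⟨hs1, ?_, by omega⟩, rfl, rfl⟩
          rcases lt_or_eq_of_le hs3 with h | rfl
          · exact h
          · omega
    · rintro (⟨c, ⟨h1, h2⟩, rfl, rfl⟩ | ⟨s, ⟨hs1, hs2, hs3⟩, rfl, rfl⟩)
      · exact ⟨Or.inl ⟨h1, h2⟩, rfl⟩
      · exact ⟨Or.inr ⟨s, hs1, hr, le_of_lt hs2, rfl⟩, rfl⟩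
  have hdisj : Disjoint A B := by
    rw [Finset.disjoint_left]
    rintro p hpA hpB
    simp only [hA, Finset.mem_image, Finset.mem_Icc] at hpA
    simp only [hB, Finset.mem_image, Finset.mem_filter, Finsupp.mem_support_iff] at hpB
    obtain ⟨c, ⟨h1, h2⟩, rfl⟩ := hpA
    obtain ⟨s, ⟨hs1, hs2, hs3⟩, heq⟩ := hpB
    have : α s = c := congrArg Prod.snd heq
    omega
  have hcardA : A.card = α r := by
    rw [hA, Finset.card_image_of_injective _ (fun a b hab => by simpa using hab),
      Nat.card_Icc]
    omega
  have hcardB : B.card = (α.support.filter fun r' => r < r' ∧ α r < α r').card := by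
    rw [hB]
    apply Finset.card_image_of_injOn
    intro s hsmem t htmem heq
    simp only [Finset.mem_coe, Finset.mem_filter, Finsupp.mem_support_iff] at hsmem htmem
    have h1 : α s = α t := congrArg Prod.snd heq
    exact hs s t (by omega) h1
  rw [hT, Finset.card_union_of_disjoint hdisj, hcardA, hcardB]

end
end

section
/- Let α be a snowy weak composition and i an index with α_i > α_{i+1}. Then rajcode(s_i α) = s_i(rajcode(α)) + e_i, where s_i swaps the i-th and (i+1)-th entries of a weak composition, and e_i is the weak composition with 1 in position i and 0 elsewhere. -/
open scoped Classical

noncomputable section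

namespace RajAux

lemma mem_keyDiagram {α : WeakComp} {p : ℕ × ℕ} :
    p ∈ keyDiagram α ↔ 1 ≤ p.2 ∧ p.2 ≤ α p.1 := by
  constructor
  · intro hp
    simp only [keyDiagram, Finset.mem_biUnion, Finset.mem_image] at hp
    obtain ⟨r, hr, c, hc, hpc⟩ := hp
    simp only [Finset.mem_Icc] at hc
    subst hpc
    exact ⟨hc.1, hc.2⟩
  · rintro ⟨h1, h2⟩
    simp only [keyDiagram, Finset.mem_biUnion, Finset.mem_image]
    exact ⟨p.1, Finsupp.mem_support_iff.2 (by omega), p.2, Finset.mem_Icc.2 ⟨h1, h2⟩, rfl⟩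

lemma row_le_rowBound {D : Finset (ℕ × ℕ)} {p : ℕ × ℕ} (hp : p ∈ D) :
    p.1 ≤ rowBound D :=
  Finset.le_sup (f := id) (Finset.mem_image_of_mem Prod.fst hp)

lemma darkStep_empty (D S : Finset (ℕ × ℕ)) (r : ℕ)
    (h : ∀ p ∈ D, p.1 ≠ r) : darkStep D S r = S := by
  rw [darkStep]
  split
  next hne =>
    exfalso
    obtain ⟨c, hc⟩ := hne
    simp only [Finset.mem_image, Finset.mem_filter] at hc
    obtain ⟨p, ⟨hpD, hp1, -⟩, rfl⟩ := hc
    exact h p hpD hp1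
  next => rfl

lemma darkStep_insert (D S : Finset (ℕ × ℕ)) (r c : ℕ)
    (hc : (r, c) ∈ D) (hcS : ∀ q ∈ S, q.2 ≠ c)
    (hmax : ∀ p ∈ D, p.1 = r → p.2 ≤ c) :
    darkStep D S r = insert (r, c) S := by
  rw [darkStep]
  have hm : c ∈ (Finset.filter (fun p => p.1 = r ∧ ∀ q ∈ S, q.2 ≠ p.2) D).image Prod.snd := by
    simp only [Finset.mem_image, Finset.mem_filter]
    exact ⟨(r, c), ⟨hc, rfl, hcS⟩, rfl⟩
  split
  next hne =>
    have hmx : Finset.max' _ hne = c := by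
      refine le_antisymm (Finset.max'_le _ _ _ ?_) (Finset.le_max' _ _ hm)
      intro y hy
      simp only [Finset.mem_image, Finset.mem_filter] at hy
      obtain ⟨p, ⟨hpD, hp1, -⟩, rfl⟩ := hy
      exact hmax p hpD hp1
    rw [hmx]
  next hne =>
    exact absurd ⟨_, hm⟩ hne

lemma darkAux_key (α : WeakComp) (h0 : α 0 = 0) (hs : Snowy α) (N : ℕ) :
    ∀ k, darkAux (keyDiagram α) N k
      = ((Finset.Ioc (N - k) N).filter fun r => 0 < α r).image fun r => (r, α r) := by
  intro k
  induction k with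
  | zero => simp [darkAux]
  | succ k ih =>
    rw [darkAux, ih]
    by_cases hz : α (N - k) = 0
    · rw [darkStep_empty]
      · congr 1
        ext r
        simp only [Finset.mem_filter, Finset.mem_Ioc]
        constructor
        · rintro ⟨⟨h1, h2⟩, h3⟩
          refine ⟨⟨?_, h2⟩, h3⟩
          omega
        · rintro ⟨⟨h1, h2⟩, h3⟩
          have : r ≠ N - k := by rintro rfl; omega
          exact ⟨⟨by omega, h2⟩, h3⟩
      · intro p hp hp1
        have h := mem_keyDiagram.1 hp
        rw [hp1] at h
        omega
    · have hNk : N - k ≠ 0 := by rintro h; rw [h, h0] at hz; exact hz rfl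
      rw [darkStep_insert (c := α (N - k))]
      · have hins : (Finset.Ioc (N - (k + 1)) N).filter (fun r => 0 < α r)
            = insert (N - k) ((Finset.Ioc (N - k) N).filter fun r => 0 < α r) := by
          ext r
          simp only [Finset.mem_filter, Finset.mem_Ioc, Finset.mem_insert]
          constructor
          · rintro ⟨⟨h1, h2⟩, h3⟩
            by_cases h : r = N - k
            · exact Or.inl h
            · exact Or.inr ⟨⟨by omega, h2⟩, h3⟩
          · rintro (rfl | ⟨⟨h1, h2⟩, h3⟩)
            · exact ⟨⟨by omega, by omega⟩, by omega⟩
            · exact ⟨⟨by omega, h2⟩, h3⟩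
        rw [hins, Finset.image_insert]
      · exact mem_keyDiagram.2 ⟨by omega, le_rfl⟩
      · rintro q hq
        obtain ⟨r', hr', rfl⟩ := Finset.mem_image.1 hq
        simp only [Finset.mem_filter, Finset.mem_Ioc] at hr'
        intro hval
        have := hs (N - k) r' (by omega) hval.symm
        omega
      · intro p hp hp1
        have h := (mem_keyDiagram.1 hp).2
        rw [hp1] at h
        exact h

lemma dark_key (α : WeakComp) (h0 : α 0 = 0) (hs : Snowy α) :
    dark (keyDiagram α) = α.support.image fun r => (r, α r) := by
  rw [dark, darkAux_key α h0 hs]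
  congr 1
  ext r
  simp only [Finset.mem_filter, Finset.mem_Ioc, Finsupp.mem_support_iff, Nat.sub_self]
  constructor
  · rintro ⟨-, h3⟩; omega
  · intro h
    have h1 : 0 < r := by
      rcases Nat.eq_zero_or_pos r with rfl | h'
      · exact absurd h0 h
      · exact h'
    have h2 : r ≤ rowBound (keyDiagram α) :=
      row_le_rowBound (p := (r, α r)) (mem_keyDiagram.2 ⟨by omega, le_rfl⟩)
    exact ⟨⟨h1, h2⟩, by omega⟩

lemma snow_pos_row (α : WeakComp) (h0 : α 0 = 0) {p : ℕ × ℕ}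
    (hp : p ∈ snow (keyDiagram α)) : 1 ≤ p.1 := by
  rw [snow, Finset.mem_union] at hp
  rcases hp with hp | hp
  · have h := mem_keyDiagram.1 hp
    rcases Nat.eq_zero_or_pos p.1 with h' | h'
    · rw [h', h0] at h; omega
    · exact h'
  · obtain ⟨q, -, hq⟩ := Finset.mem_biUnion.1 hp
    obtain ⟨ρ, hρ, hρp⟩ := Finset.mem_image.1 hq
    subst hρp
    exact (Finset.mem_Icc.1 hρ).1

lemma rajcode_zero (α : WeakComp) (h0 : α 0 = 0) : rajcode α 0 = 0 := by
  rw [rajcode, rajcodeD, Finset.card_eq_zero, Finset.filter_eq_empty_iff]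
  intro p hp
  have := snow_pos_row α h0 hp
  omega

lemma snow_row (α : WeakComp) (h0 : α 0 = 0) (hs : Snowy α) (r : ℕ) (hr : 1 ≤ r) :
    ((snow (keyDiagram α)).filter fun p => p.1 = r)
      = ((Finset.Icc 1 (α r)) ∪ ((α.support.filter fun r' => r ≤ r').image α)).image
          fun c => (r, c) := by
  ext ⟨p1, p2⟩
  simp only [Finset.mem_filter]
  constructor
  · rintro ⟨hpm, hp1⟩
    obtain rfl : p1 = r := hp1
    rw [snow, Finset.mem_union] at hpm
    rw [Finset.mem_image]
    rcases hpm with hp | hp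
    · have h := mem_keyDiagram.1 hp
      exact ⟨p2, Finset.mem_union_left _ (Finset.mem_Icc.2 ⟨h.1, h.2⟩), rfl⟩
    · obtain ⟨q, hq, hpq⟩ := Finset.mem_biUnion.1 hp
      rw [dark_key α h0 hs] at hq
      obtain ⟨r', hr', rfl⟩ := Finset.mem_image.1 hq
      obtain ⟨ρ, hρ, hρp⟩ := Finset.mem_image.1 hpq
      simp only [Prod.mk.injEq] at hρp
      obtain ⟨rfl, rfl⟩ := hρp
      refine ⟨α r', Finset.mem_union_right _ ?_, rfl⟩
      refine Finset.mem_image.2 ⟨r', Finset.mem_filter.2 ⟨hr', ?_⟩, rfl⟩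
      exact (Finset.mem_Icc.1 hρ).2
  · intro hp
    obtain ⟨c, hc, hcp⟩ := Finset.mem_image.1 hp
    simp only [Prod.mk.injEq] at hcp
    obtain ⟨rfl, rfl⟩ := hcp
    refine ⟨?_, rfl⟩
    rw [snow, Finset.mem_union]
    rcases Finset.mem_union.1 hc with hc | hc
    · exact Or.inl (mem_keyDiagram.2 ⟨(Finset.mem_Icc.1 hc).1, (Finset.mem_Icc.1 hc).2⟩)
    · obtain ⟨r', hr', rfl⟩ := Finset.mem_image.1 hc
      obtain ⟨hr'0, hr'r⟩ := Finset.mem_filter.1 hr'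
      refine Or.inr (Finset.mem_biUnion.2 ⟨(r', α r'), ?_, ?_⟩)
      · rw [dark_key α h0 hs]; exact Finset.mem_image.2 ⟨r', hr'0, rfl⟩
      · exact Finset.mem_image.2 ⟨r, Finset.mem_Icc.2 ⟨hr, hr'r⟩, rfl⟩

end RajAux
namespace RajAux

lemma rajcode_formula (α : WeakComp) (h0 : α 0 = 0) (hs : Snowy α) (r : ℕ) (hr : 1 ≤ r) :
    rajcode α r = α r + (α.support.filter fun r' => r < r' ∧ α r < α r').card := by
  rw [rajcode, rajcodeD, snow_row α h0 hs r hr,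
    Finset.card_image_of_injective _ (fun a b h => by simpa using h)]
  rw [← Finset.union_sdiff_self_eq_union,
    Finset.card_union_of_disjoint Finset.disjoint_sdiff, Nat.card_Icc]
  have hset : ((α.support.filter fun r' => r ≤ r').image α) \ Finset.Icc 1 (α r)
      = (α.support.filter fun r' => r < r' ∧ α r < α r').image α := by
    ext c
    simp only [Finset.mem_sdiff, Finset.mem_image, Finset.mem_filter, Finset.mem_Icc,
      Finsupp.mem_support_iff]
    constructor
    · rintro ⟨⟨r', ⟨h1, h2⟩, rfl⟩, h3⟩
      have hgt : α r < α r' := by omega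
      have : r ≠ r' := by rintro rfl; omega
      exact ⟨r', ⟨h1, by omega, hgt⟩, rfl⟩
    · rintro ⟨r', ⟨h1, h2, h3⟩, rfl⟩
      exact ⟨⟨r', ⟨h1, by omega⟩, rfl⟩, by omega⟩
  rw [hset, Finset.card_image_of_injOn ?_]
  · omega
  intro a ha b hb hab
  simp only [Finset.coe_filter, Set.mem_setOf_eq, Finsupp.mem_support_iff] at ha hb
  exact hs a b (by omega) hab

end RajAux
/-- for snowy `α` with `α_i > α_{i+1}`,
`rajcode(s_i α) = s_i(rajcode α) + e_i`. -/
theorem rajcode_swap_of_snowy (α : WeakComp) (i : ℕ) (h0 : α 0 = 0) (hs : Snowy α)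
    (hi : 1 ≤ i) (hlt : α (i + 1) < α i) :
    ∀ r : ℕ, rajcode (swapEntries i α) r
      = rajcode α (Equiv.swap i (i + 1) r) + (if r = i then 1 else 0) := by
  have hβapp : ∀ s, swapEntries i α s = α (Equiv.swap i (i + 1) s) := by
    intro s
    simp [swapEntries, Finsupp.equivMapDomain_apply, Equiv.symm_swap]
  have hσ0 : Equiv.swap i (i + 1) 0 = 0 :=
    Equiv.swap_apply_of_ne_of_ne (by omega) (by omega)
  have hσi : Equiv.swap i (i + 1) i = i + 1 := Equiv.swap_apply_left _ _
  have hσi1 : Equiv.swap i (i + 1) (i + 1) = i := Equiv.swap_apply_right _ _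
  have hσelse : ∀ s, s ≠ i → s ≠ i + 1 → Equiv.swap i (i + 1) s = s := fun s h1 h2 =>
    Equiv.swap_apply_of_ne_of_ne h1 h2
  have hβ0 : swapEntries i α 0 = 0 := by rw [hβapp, hσ0, h0]
  have hβs : Snowy (swapEntries i α) := by
    intro s s' hpos heq
    rw [hβapp] at hpos heq
    rw [hβapp] at heq
    exact (Equiv.swap i (i + 1)).injective
      (hs _ _ hpos heq)
  have hβsupp : ∀ s, s ∈ (swapEntries i α).support ↔ α (Equiv.swap i (i + 1) s) ≠ 0 := by
    intro s; rw [Finsupp.mem_support_iff, hβapp]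
  intro r
  rcases Nat.eq_zero_or_pos r with rfl | hr1
  · rw [hσ0, RajAux.rajcode_zero _ hβ0, RajAux.rajcode_zero _ h0, if_neg (by omega)]
  have hσr1 : 1 ≤ Equiv.swap i (i + 1) r := by
    by_contra h
    have : Equiv.swap i (i + 1) r = 0 := by omega
    have := (Equiv.swap i (i + 1)).injective (this.trans hσ0.symm)
    omega
  rw [RajAux.rajcode_formula _ hβ0 hβs r hr1,
    RajAux.rajcode_formula _ h0 hs _ hσr1]
  have key : ((swapEntries i α).support.filter fun r' =>
        r < r' ∧ swapEntries i α r < swapEntries i α r').card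
      = (α.support.filter fun r' => Equiv.swap i (i + 1) r < r' ∧
          α (Equiv.swap i (i + 1) r) < α r').card + (if r = i then 1 else 0) := by
    by_cases hri : r = i
    · subst hri
      rw [if_pos rfl, hσi]
      have hset : ((swapEntries r α).support.filter fun r' =>
            r < r' ∧ swapEntries r α r < swapEntries r α r')
          = insert (r + 1) (α.support.filter fun r' => r + 1 < r' ∧ α (r + 1) < α r') := by
        ext r'
        simp only [Finset.mem_filter, Finset.mem_insert, hβsupp, Finsupp.mem_support_iff,
          hβapp, hσi]
        constructor
        · rintro ⟨hne, hlt1, hlt2⟩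
          by_cases h : r' = r + 1
          · exact Or.inl h
          · rw [hσelse r' (by omega) h] at hne hlt2
            exact Or.inr ⟨hne, by omega, hlt2⟩
        · rintro (rfl | ⟨hne, hlt1, hlt2⟩)
          · rw [hσi1]
            exact ⟨by omega, by omega, hlt⟩
          · rw [hσelse r' (by omega) (by omega)]
            exact ⟨hne, by omega, hlt2⟩
      rw [hset, Finset.card_insert_of_notMem (by simp)]
    · rw [if_neg hri]
      by_cases hri1 : r = i + 1
      · subst hri1
        rw [hσi1]
        have hset : ((swapEntries i α).support.filter fun r' =>
              i + 1 < r' ∧ swapEntries i α (i + 1) < swapEntries i α r')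
            = α.support.filter fun r' => i < r' ∧ α i < α r' := by
          ext r'
          simp only [Finset.mem_filter, hβsupp, Finsupp.mem_support_iff, hβapp, hσi1]
          constructor
          · rintro ⟨hne, hlt1, hlt2⟩
            rw [hσelse r' (by omega) (by omega)] at hne hlt2
            exact ⟨hne, by omega, hlt2⟩
          · rintro ⟨hne, hlt1, hlt2⟩
            have h' : r' ≠ i + 1 := by rintro rfl; omega
            rw [hσelse r' (by omega) h']
            exact ⟨hne, by omega, hlt2⟩
        rw [hset]
        omega
      · -- r ∉ {i, i+1}
        rw [hσelse r hri hri1]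
        rw [Nat.add_zero]
        apply Finset.card_bij' (i := fun r' _ => Equiv.swap i (i + 1) r')
          (j := fun r' _ => Equiv.swap i (i + 1) r')
        · intro r' hr'
          simp only [Finset.mem_filter, hβsupp, Finsupp.mem_support_iff, hβapp,
            hσelse r hri hri1] at hr' ⊢
          obtain ⟨hne, hlt1, hlt2⟩ := hr'
          refine ⟨hne, ?_, hlt2⟩
          by_cases h1 : r' = i
          · subst h1; rw [hσi]; omega
          by_cases h2 : r' = i + 1
          · subst h2; rw [hσi1]; omega
          · rw [hσelse r' h1 h2]; exact hlt1
        · intro r' hr'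
          simp only [Finset.mem_filter, hβsupp, Finsupp.mem_support_iff, hβapp,
            hσelse r hri hri1, Equiv.swap_apply_self] at hr' ⊢
          obtain ⟨hne, hlt1, hlt2⟩ := hr'
          refine ⟨hne, ?_, hlt2⟩
          by_cases h1 : r' = i
          · subst h1; rw [hσi]; omega
          by_cases h2 : r' = i + 1
          · subst h2; rw [hσi1]; omega
          · rw [hσelse r' h1 h2]; exact hlt1
        · intro r' _; exact Equiv.swap_apply_self _ _ _
        · intro r' _; exact Equiv.swap_apply_self _ _ _
  have hv := hβapp r
  omega

end
end

section
/- Let D be a diagram and (r,c) ∈ D. If no cell (r',c) with r' > r is a dark cloud of D and no cell (r,c') with c' > c is a dark cloud of D, then (r,c) is a dark cloud of D. -/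
open scoped Classical

noncomputable section

lemma darkAux_subset_succ (D : Finset (ℕ × ℕ)) (N k : ℕ) :
    darkAux D N k ⊆ darkAux D N (k + 1) := by
  show darkAux D N k ⊆ darkStep D (darkAux D N k) (N - k)
  unfold darkStep
  dsimp only
  split
  · exact Finset.subset_insert _ _
  · exact subset_rfl

lemma darkAux_mono (D : Finset (ℕ × ℕ)) (N : ℕ) {k m : ℕ} (h : k ≤ m) :
    darkAux D N k ⊆ darkAux D N m := by
  induction m with
  | zero => simpa [Nat.le_zero.mp h] using subset_rfl
  | succ m ih =>
    rcases Nat.lt_or_ge k (m + 1) with h' | h'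
    · exact (ih (Nat.lt_succ_iff.mp h')).trans (darkAux_subset_succ D N m)
    · have : k = m + 1 := le_antisymm h h'
      subst this; exact subset_rfl

lemma darkAux_fst (D : Finset (ℕ × ℕ)) (N : ℕ) {k : ℕ} (hk : k ≤ N) :
    ∀ p ∈ darkAux D N k, N - k < p.1 := by
  induction k with
  | zero => intro p hp; simp [darkAux] at hp
  | succ k ih =>
    intro p hp
    have hkN : k ≤ N := Nat.le_of_succ_le hk
    unfold darkAux darkStep at hp
    dsimp only at hp
    split at hp
    · rcases Finset.mem_insert.mp hp with h | h
      · subst h; simp; omega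
      · have := ih hkN p h; omega
    · have := ih hkN p hp; omega

/-- a cell of `D` with no dark cloud below it in its column and no
dark cloud to its right in its row is itself a dark cloud. -/
theorem mem_dark_of_no_dark_below_right (D : Finset (ℕ × ℕ))
    (hD : ∀ p ∈ D, 1 ≤ p.1 ∧ 1 ≤ p.2) (r c : ℕ) (hrc : (r, c) ∈ D)
    (hbelow : ∀ r', r < r' → (r', c) ∉ dark D)
    (hright : ∀ c', c < c' → (r, c') ∉ dark D) :
    (r, c) ∈ dark D := by
  set N := rowBound D with hN
  have hr1 : 1 ≤ r := (hD _ hrc).1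
  have hrN : r ≤ N := by
    have : r ∈ D.image Prod.fst := Finset.mem_image.mpr ⟨(r, c), hrc, rfl⟩
    simpa [hN, rowBound] using Finset.le_sup (f := id) this
  set S := darkAux D N (N - r) with hS
  have hSdark : S ⊆ dark D := darkAux_mono D N (Nat.sub_le N r)
  have hSfst : ∀ q ∈ S, r < q.1 := by
    intro q hq
    have := darkAux_fst D N (Nat.sub_le N r) q hq
    omega
  have hScol : ∀ q ∈ S, q.2 ≠ c := by
    intro q hq hqc
    have hq' : (q.1, c) ∈ dark D := by
      rw [← hqc]; exact hSdark hq
    exact hbelow q.1 (hSfst q hq) hq'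
  have hstep : darkAux D N (N - r + 1) = darkStep D S r := by
    show darkStep D (darkAux D N (N - r)) (N - (N - r)) = darkStep D S r
    rw [← hS, Nat.sub_sub_self hrN]
  have hsub : darkAux D N (N - r + 1) ⊆ dark D := darkAux_mono D N (by omega)
  have hspec : ∃ m, c ≤ m ∧ (r, m) ∈ darkStep D S r := by
    unfold darkStep
    dsimp only
    split
    next h =>
      refine ⟨Finset.max' _ h, ?_, Finset.mem_insert_self _ _⟩
      apply Finset.le_max'
      apply Finset.mem_image_of_mem (f := Prod.snd) (a := (r, c))
      simp only [Finset.mem_filter]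
      exact ⟨hrc, trivial, hScol⟩
    next h =>
      exact absurd ⟨c, Finset.mem_image_of_mem (f := Prod.snd) (a := (r, c))
        (by simp only [Finset.mem_filter]; exact ⟨hrc, trivial, hScol⟩)⟩ h
  obtain ⟨m, hcm, hm⟩ := hspec
  have hmd : (r, m) ∈ dark D := hsub (hstep ▸ hm)
  have : m = c := by
    by_contra h
    exact hright m (lt_of_le_of_ne hcm (Ne.symm h)) hmd
  rwa [this] at hmd

end
end

section
/- Let w ∈ S_n be a permutation, and for each q let LIS^w(q) be the length of the longest increasing subsequence of w(1),...,w(n) that starts with the value q. Then for every r ∈ [n], rajcode(RD(w))_r = n + 1 − r − LIS^w(w(r)). That is, the number of cells in row r of the snow diagram of the Rothe diagram of w equals n + 1 − r − LIS^w(w(r)). -/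
open scoped Classical

noncomputable section

namespace Aux11

lemma iR_self_mem (L : List ℕ) (x : ℕ) : x ∈ (insertRow L x).1 := by
  induction L with
  | nil => simp [insertRow]
  | cons a t ih =>
      rw [insertRow]
      by_cases h : a < x
      · simp [h]
      · simp only [if_neg h, List.mem_cons]
        exact Or.inr ih

lemma iR_mem (L : List ℕ) (x b : ℕ) (hb : b ∈ (insertRow L x).1) : b ∈ L ∨ b = x := by
  induction L with
  | nil => simp [insertRow] at hb; tauto
  | cons a t ih =>
      rw [insertRow] at hb
      by_cases h : a < x
      · simp [h] at hb
        rcases hb with h1 | h1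
        · exact Or.inr h1
        · exact Or.inl (List.mem_cons_of_mem _ h1)
      · simp only [if_neg h, List.mem_cons] at hb
        rcases hb with h1 | h1
        · exact Or.inl (h1 ▸ (@List.mem_cons_self _ a t))
        · rcases ih h1 with h2 | h2
          · exact Or.inl (List.mem_cons_of_mem _ h2)
          · exact Or.inr h2

lemma iR_sorted {L : List ℕ} (hL : L.Pairwise (· > ·)) (x : ℕ) (hx : ∀ b ∈ L, b ≠ x) :
    ((insertRow L x).1).Pairwise (· > ·) := by
  induction L with
  | nil => simp [insertRow]
  | cons a t ih =>
      rw [insertRow]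
      rw [List.pairwise_cons] at hL
      by_cases h : a < x
      · simp only [if_pos h]
        rw [List.pairwise_cons]
        exact ⟨fun b hb => lt_trans (hL.1 b hb) h, hL.2⟩
      · simp only [if_neg h]
        rw [List.pairwise_cons]
        have hax : x < a := lt_of_le_of_ne (not_lt.mp h) (Ne.symm (hx a ((@List.mem_cons_self _ a t))))
        refine ⟨fun b hb => ?_, ih hL.2 (fun b hb => hx b (List.mem_cons_of_mem _ hb))⟩
        rcases iR_mem t x b hb with h1 | h1
        · exact hL.1 b h1
        · exact h1 ▸ hax

lemma iR_countP_le (L : List ℕ) (x v : ℕ) :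
    L.countP (fun b => decide (v ≤ b)) ≤ ((insertRow L x).1).countP (fun b => decide (v ≤ b)) := by
  induction L with
  | nil => simp
  | cons a t ih =>
      rw [insertRow]
      by_cases h : a < x
      · simp only [if_pos h, List.countP_cons]
        have : (if decide (v ≤ a) = true then 1 else 0) ≤ (if decide (v ≤ x) = true then 1 else 0) := by
          by_cases hva : v ≤ a
          · simp [hva, le_trans hva (le_of_lt h)]
          · simp [hva]
        omega
      · simp only [if_neg h, List.countP_cons]
        omega

lemma iR_countP_ge {L : List ℕ} (hL : L.Pairwise (· > ·)) {x : ℕ} (hx : ∀ b ∈ L, b ≠ x) :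
    ((insertRow L x).1).countP (fun b => decide (x ≤ b))
      = L.countP (fun b => decide (x < b)) + 1 := by
  induction L with
  | nil => simp [insertRow]
  | cons a t ih =>
      rw [insertRow]
      rw [List.pairwise_cons] at hL
      by_cases h : a < x
      · simp only [if_pos h, List.countP_cons]
        have h1 : t.countP (fun b => decide (x ≤ b)) = 0 := by
          rw [List.countP_eq_zero]
          intro b hb
          simp only [decide_eq_true_eq, not_le]
          exact lt_trans (hL.1 b hb) h
        have h2 : (a :: t).countP (fun b => decide (x < b)) = 0 := by
          rw [List.countP_eq_zero]
          intro b hb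
          simp only [decide_eq_true_eq, not_lt]
          rcases List.mem_cons.mp hb with h3 | h3
          · exact le_of_lt (h3 ▸ h)
          · exact le_of_lt (lt_trans (hL.1 b h3) h)
        simp only [List.countP_cons] at h1 h2 ⊢
        simp only [h2]
        have : ¬ (x ≤ a) := not_le.mpr h
        simp [h1, this, le_refl]
      · have hax : x < a := lt_of_le_of_ne (not_lt.mp h) (Ne.symm (hx a ((@List.mem_cons_self _ a t))))
        simp only [if_neg h, List.countP_cons,
          ih hL.2 (fun b hb => hx b (List.mem_cons_of_mem _ hb))]
        simp [le_of_lt hax, hax]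

lemma iR_countP_mem {L : List ℕ} (hL : L.Pairwise (· > ·)) {x a : ℕ} (hx : ∀ b ∈ L, b ≠ x)
    (ha : a ∈ L) :
    ((insertRow L x).1).countP (fun b => decide (a ≤ b)) = L.countP (fun b => decide (a ≤ b)) := by
  induction L with
  | nil => simp at ha
  | cons c t ih =>
      rw [insertRow]
      rw [List.pairwise_cons] at hL
      have hac : a ≤ c := by
        rcases List.mem_cons.mp ha with h1 | h1
        · exact le_of_eq h1
        · exact le_of_lt (hL.1 a h1)
      by_cases h : c < x
      · simp only [if_pos h, List.countP_cons]
        simp [hac, le_trans hac (le_of_lt h)]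
      · simp only [if_neg h, List.countP_cons]
        rcases List.mem_cons.mp ha with h1 | h1
        · -- a = c : all entries of (insertRow t x).1 are < a and all of t are < a
          subst h1
          have hax : x < a := lt_of_le_of_ne (not_lt.mp h) (Ne.symm (hx a ((@List.mem_cons_self _ a t))))
          have e1 : t.countP (fun b => decide (a ≤ b)) = 0 := by
            rw [List.countP_eq_zero]
            intro b hb; simp only [decide_eq_true_eq, not_le]; exact hL.1 b hb
          have e2 : ((insertRow t x).1).countP (fun b => decide (a ≤ b)) = 0 := by
            rw [List.countP_eq_zero]
            intro b hb; simp only [decide_eq_true_eq, not_le]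
            rcases iR_mem t x b hb with h2 | h2
            · exact hL.1 b h2
            · exact h2 ▸ hax
          rw [e1, e2]
        · rw [ih hL.2 (fun b hb => hx b (List.mem_cons_of_mem _ hb)) h1]

lemma iR_append {L : List ℕ} (x : ℕ) (h : ∀ b ∈ L, ¬ b < x) :
    insertRow L x = (L ++ [x], none) := by
  induction L with
  | nil => simp [insertRow]
  | cons a t ih =>
      rw [insertRow, if_neg (h a ((@List.mem_cons_self _ a t))),
        ih (fun b hb => h b (List.mem_cons_of_mem _ hb))]
      simp

lemma iR_bump {L : List ℕ} (hL : L.Pairwise (· > ·)) {x m : ℕ} (hm : m ∈ L) (hmx : m < x)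
    (hmax : ∀ c ∈ L, c < x → c ≤ m) :
    (insertRow L x).2 = some m ∧
      ((insertRow L x).1).toFinset = insert x (L.toFinset.erase m) := by
  induction L with
  | nil => simp at hm
  | cons a t ih =>
      rw [insertRow]
      rw [List.pairwise_cons] at hL
      have hanot : a ∉ t := fun h => lt_irrefl a (hL.1 a h)
      by_cases h : a < x
      · have hma : m = a := le_antisymm
          (by rcases List.mem_cons.mp hm with h1 | h1; exact le_of_eq h1; exact le_of_lt (hL.1 m h1))
          (hmax a ((@List.mem_cons_self _ a t)) h)
        subst hma
        simp only [if_pos h]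
        constructor
        · trivial
        · simp only [List.toFinset_cons]
          rw [Finset.erase_insert (by simp [List.mem_toFinset]; exact hanot)]
      · have hma : m ∈ t := by
          rcases List.mem_cons.mp hm with h1 | h1
          · exact absurd (h1 ▸ hmx) h
          · exact h1
        have ham : a ≠ m := fun he => hanot (he ▸ hma)
        obtain ⟨ih1, ih2⟩ := ih hL.2 hma (fun c hc hcx => hmax c (List.mem_cons_of_mem _ hc) hcx)
        simp only [if_neg h]
        refine ⟨ih1, ?_⟩
        simp only [List.toFinset_cons, ih2]
        rw [Finset.insert_comm, Finset.erase_insert_of_ne ham]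

lemma countP_pos_iff {L : List ℕ} {p : ℕ → Bool} :
    0 < L.countP p ↔ ∃ b ∈ L, p b := by
  rw [List.countP_eq_length_filter, List.length_pos_iff_exists_mem]
  constructor
  · rintro ⟨b, hb⟩
    exact ⟨b, (List.mem_filter.mp hb).1, (List.mem_filter.mp hb).2⟩
  · rintro ⟨b, hb, hp⟩
    exact ⟨b, List.mem_filter.mpr ⟨hb, hp⟩⟩


variable {n : ℕ} (w : Equiv.Perm (Fin n))

/-- there is an increasing subsequence of length ≥ ℓ starting at position j -/
def IncFrom (j : Fin n) (ℓ : ℕ) : Prop :=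
  ∃ s : Finset (Fin n), j ∈ s ∧ (∀ i ∈ s, j ≤ i) ∧
    (∀ i ∈ s, ∀ i' ∈ s, i < i' → w i < w i') ∧ ℓ ≤ s.card

lemma IncFrom.mono {w : Equiv.Perm (Fin n)} {j : Fin n} {ℓ ℓ' : ℕ} (h : IncFrom w j ℓ)
    (hle : ℓ' ≤ ℓ) : IncFrom w j ℓ' := by
  obtain ⟨s, h1, h2, h3, h4⟩ := h
  exact ⟨s, h1, h2, h3, le_trans hle h4⟩

lemma IncFrom.one {w : Equiv.Perm (Fin n)} (j : Fin n) : IncFrom w j 1 :=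
  ⟨{j}, Finset.mem_singleton_self j, by simp, by simp, by simp⟩

lemma IncFrom.prepend {w : Equiv.Perm (Fin n)} {j i : Fin n} {ℓ : ℕ}
    (h : IncFrom w j ℓ) (hij : i < j) (hw : w i < w j) : IncFrom w i (ℓ + 1) := by
  obtain ⟨s, h1, h2, h3, h4⟩ := h
  have hins : i ∉ s := fun hmem => absurd (h2 i hmem) (not_le.mpr hij)
  refine ⟨insert i s, Finset.mem_insert_self i s, ?_, ?_, ?_⟩
  · intro m hm
    rcases Finset.mem_insert.mp hm with h5 | h5
    · exact le_of_eq h5.symm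
    · exact le_trans (le_of_lt hij) (h2 m h5)
  · intro m hm m' hm' hlt
    rcases Finset.mem_insert.mp hm with h5 | h5
    · subst h5
      rcases Finset.mem_insert.mp hm' with h6 | h6
      · subst h6; exact absurd hlt (lt_irrefl _)
      · rcases eq_or_lt_of_le (h2 m' h6) with h7 | h7
        · exact h7 ▸ hw
        · exact lt_trans hw (h3 j h1 m' h6 h7)
    · rcases Finset.mem_insert.mp hm' with h6 | h6
      · exact absurd (lt_of_lt_of_le hlt (h6 ▸ le_trans (le_of_lt hij) (h2 m h5))) (lt_irrefl m)
      · exact h3 m h5 m' h6 hlt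
  · rw [Finset.card_insert_of_notMem hins]
    omega

lemma oneline_lt {i : ℕ} (h : i < n) : oneline w i = (w ⟨i, h⟩ : ℕ) + 1 := dif_pos h

lemma oneline_inj {i j : Fin n} (h : oneline w i = oneline w j) : i = j := by
  rw [oneline_lt w i.isLt, oneline_lt w j.isLt] at h
  have : w ⟨(i:ℕ), i.isLt⟩ = w ⟨(j:ℕ), j.isLt⟩ := Fin.ext (by omega)
  have := w.injective this
  exact Fin.ext (congrArg Fin.val this)

lemma mem_rothe_iff (i : Fin n) (c : ℕ) :
    ((i : ℕ) + 1, c) ∈ rothe w ↔ ∃ j : Fin n, i < j ∧ w j < w i ∧ c = (w j : ℕ) + 1 := by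
  unfold rothe
  simp only [Finset.mem_image, Finset.mem_filter, Finset.mem_univ, true_and, Prod.exists]
  constructor
  · rintro ⟨a, b, ⟨hab, hw⟩, heq⟩
    have h1 : (a : ℕ) = (i : ℕ) := by
      have := congrArg Prod.fst heq; simpa using this
    have h2 : a = i := Fin.ext h1
    subst h2
    exact ⟨b, hab, hw, (congrArg Prod.snd heq).symm⟩
  · rintro ⟨j, hij, hw, hc⟩
    exact ⟨i, j, ⟨hij, hw⟩, by simp [hc]⟩

lemma rothe_row_le {p : ℕ × ℕ} (hp : p ∈ rothe w) : p.1 ≤ n := by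
  unfold rothe at hp
  simp only [Finset.mem_image, Finset.mem_filter, Finset.mem_univ, true_and, Prod.exists] at hp
  obtain ⟨a, b, _, heq⟩ := hp
  have := congrArg Prod.fst heq
  simp only at this
  omega


lemma darkStep_eq (D S : Finset (ℕ × ℕ)) (r : ℕ) :
    darkStep D S r =
      if h : ((D.filter fun p => p.1 = r ∧ ∀ q ∈ S, q.2 ≠ p.2).image Prod.snd).Nonempty then
        insert (r, Finset.max' _ h) S
      else S := rfl

lemma darkStep_eq_of (D S : Finset (ℕ × ℕ)) (r : ℕ) (T : Finset ℕ)
    (hT : ((D.filter fun p => p.1 = r ∧ ∀ q ∈ S, q.2 ≠ p.2).image Prod.snd) = T)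
    (h : T.Nonempty) : darkStep D S r = insert (r, T.max' h) S := by
  subst hT; rw [darkStep_eq, dif_pos h]

lemma darkStep_eq_of_empty (D S : Finset (ℕ × ℕ)) (r : ℕ)
    (hT : ((D.filter fun p => p.1 = r ∧ ∀ q ∈ S, q.2 ≠ p.2).image Prod.snd) = ∅) :
    darkStep D S r = S := by
  rw [darkStep_eq, dif_neg]
  rw [hT]
  exact Finset.not_nonempty_empty

variable {n : ℕ}

def Vset (w : Equiv.Perm (Fin n)) (k : ℕ) : Finset ℕ :=
  ((Finset.univ : Finset (Fin n)).filter (fun j : Fin n => n - k ≤ (j : ℕ))).image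
    (fun j : Fin n => (w j : ℕ) + 1)

lemma mem_Vset {w : Equiv.Perm (Fin n)} {a k : ℕ} :
    a ∈ Vset w k ↔ ∃ j : Fin n, n - k ≤ (j : ℕ) ∧ (w j : ℕ) + 1 = a := by
  simp only [Vset, Finset.mem_image, Finset.mem_filter, Finset.mem_univ, true_and]

lemma master (w : Equiv.Perm (Fin n)) : ∀ k, k ≤ n →
    (rowOneAux w k).Pairwise (· > ·) ∧
    (∀ a ∈ rowOneAux w k, a ∈ Vset w k) ∧
    (∀ a ∈ rowOneAux w k, ∃ j : Fin n, n - k ≤ (j : ℕ) ∧ (w j : ℕ) + 1 = a ∧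
      IncFrom w j ((rowOneAux w k).countP (fun b => decide (a ≤ b)))) ∧
    (∀ j : Fin n, n - k ≤ (j : ℕ) → ∀ ℓ, IncFrom w j ℓ →
      ℓ ≤ (rowOneAux w k).countP (fun b => decide ((w j : ℕ) + 1 ≤ b))) ∧
    ((darkAux (rothe w) n k).image Prod.snd = Vset w k \ (rowOneAux w k).toFinset) ∧
    (∀ p ∈ darkAux (rothe w) n k, n - k < p.1) := by
  intro k
  induction k with
  | zero =>
      intro _
      refine ⟨by simp [rowOneAux], by simp [rowOneAux], by simp [rowOneAux], ?_, ?_, by simp [darkAux]⟩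
      · intro j hj
        exact absurd (lt_of_lt_of_le j.isLt (by omega : n ≤ (j:ℕ))) (lt_irrefl _)
      · have hV : Vset w 0 = ∅ := by
          rw [Finset.eq_empty_iff_forall_notMem]
          intro a ha
          obtain ⟨j, hj, _⟩ := mem_Vset.mp ha
          exact absurd (lt_of_lt_of_le j.isLt (by omega : n ≤ (j:ℕ))) (lt_irrefl _)
        simp [darkAux, hV]
  | succ k ih =>
      intro hk1
      have hk : k < n := hk1
      obtain ⟨inv1, inv2, inv3, inv4, inv5, inv6⟩ := ih (le_of_lt hk)
      set p : Fin n := ⟨n - 1 - k, by omega⟩ with hp_def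
      have hpv : (p : ℕ) = n - 1 - k := rfl
      set x : ℕ := (w p : ℕ) + 1 with hx_def
      have hol : oneline w (n - 1 - k) = x := by
        rw [oneline]
        rw [dif_pos (by omega : n - 1 - k < n)]
      set L : List ℕ := rowOneAux w k with hL_def
      have hL' : rowOneAux w (k + 1) = (insertRow L x).1 := by
        rw [rowOneAux, hol]
      have hV : Vset w (k + 1) = insert x (Vset w k) := by
        ext a
        rw [mem_Vset, Finset.mem_insert, mem_Vset]
        constructor
        · rintro ⟨j, hj, hja⟩
          by_cases h : n - k ≤ (j : ℕ)
          · exact Or.inr ⟨j, h, hja⟩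
          · have : j = p := Fin.ext (by omega)
            subst this
            exact Or.inl hja.symm
        · rintro (h | ⟨j, hj, hja⟩)
          · exact ⟨p, by omega, h.symm⟩
          · exact ⟨j, by omega, hja⟩
      have hxV : x ∉ Vset w k := by
        rw [mem_Vset]
        rintro ⟨j, hj, hja⟩
        have : w j = w p := Fin.ext (by omega)
        have hjp : j = p := w.injective this
        subst hjp
        omega
      have hdist : ∀ b ∈ L, b ≠ x := fun b hb he => hxV (he ▸ inv2 b hb)
      have hxmemL' : x ∈ rowOneAux w (k + 1) := hL' ▸ iR_self_mem L x
      -- the column set of the dark step equals the small entries of L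
      have hrow : (p : ℕ) + 1 = n - k := by omega
      have hcols : ((rothe w).filter fun q => q.1 = n - k ∧
            ∀ q' ∈ darkAux (rothe w) n k, q'.2 ≠ q.2).image Prod.snd
          = L.toFinset.filter (fun b => b < x) := by
        ext c
        simp only [Finset.mem_image, Finset.mem_filter, List.mem_toFinset]
        constructor
        · rintro ⟨q, ⟨hqD, hq1, hq2⟩, hqc⟩
          have hq1' : q = ((p : ℕ) + 1, c) := by
            rw [← hqc]; exact Prod.ext (by rw [hq1, hrow]) rfl
          rw [hq1'] at hqD
          obtain ⟨j, hpj, hwj, hc⟩ := (mem_rothe_iff w p c).mp hqD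
          have hcV : c ∈ Vset w k := mem_Vset.mpr ⟨j, by
            have := hpj
            rw [Fin.lt_def, hpv] at this
            omega, hc.symm⟩
          have hcnot : c ∉ (darkAux (rothe w) n k).image Prod.snd := by
            simp only [Finset.mem_image]
            rintro ⟨q', hq', hq'c⟩
            exact hq2 q' hq' (by rw [hq'c, ← hqc])
          rw [inv5, Finset.mem_sdiff] at hcnot
          have hcL : c ∈ L.toFinset := by
            by_contra hcon
            exact hcnot ⟨hcV, fun h => hcon h⟩
          refine ⟨List.mem_toFinset.mp hcL, ?_⟩
          rw [hc, hx_def]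
          have : (w j : ℕ) < (w p : ℕ) := hwj
          omega
        · rintro ⟨hcL, hcx⟩
          have hcV : c ∈ Vset w k := inv2 c hcL
          obtain ⟨j, hj, hjc⟩ := mem_Vset.mp hcV
          have hpj : p < j := by rw [Fin.lt_def, hpv]; omega
          have hwj : w j < w p := by
            rw [Fin.lt_def]
            omega
          refine ⟨((p : ℕ) + 1, c), ⟨?_, by rw [hrow], ?_⟩, rfl⟩
          · exact (mem_rothe_iff w p c).mpr ⟨j, hpj, hwj, hjc.symm⟩
          · intro q' hq' he
            have : c ∈ (darkAux (rothe w) n k).image Prod.snd :=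
              Finset.mem_image.mpr ⟨q', hq', he⟩
            rw [inv5, Finset.mem_sdiff] at this
            exact this.2 (List.mem_toFinset.mpr hcL)
      have hstep : darkAux (rothe w) n (k + 1)
          = darkStep (rothe w) (darkAux (rothe w) n k) (n - k) := rfl
      by_cases hbig : ∃ b ∈ L, b < x
      · -- bump case
        obtain ⟨b₀, hb₀L, hb₀x⟩ := hbig
        have hne : (L.toFinset.filter (fun b => b < x)).Nonempty :=
          ⟨b₀, Finset.mem_filter.mpr ⟨List.mem_toFinset.mpr hb₀L, by simpa using hb₀x⟩⟩
        set m : ℕ := (L.toFinset.filter (fun b => b < x)).max' hne with hm_def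
        have hmmem : m ∈ L.toFinset.filter (fun b => b < x) := Finset.max'_mem _ hne
        have hmL : m ∈ L := List.mem_toFinset.mp (Finset.mem_filter.mp hmmem).1
        have hmx : m < x := by simpa using (Finset.mem_filter.mp hmmem).2
        have hmax : ∀ c ∈ L, c < x → c ≤ m := by
          intro c hc hcx
          exact Finset.le_max' _ c
            (Finset.mem_filter.mpr ⟨List.mem_toFinset.mpr hc, by simpa using hcx⟩)
        obtain ⟨hbump, hLset'⟩ := iR_bump inv1 hmL hmx hmax
        have hS' : darkAux (rothe w) n (k + 1)
            = insert (n - k, m) (darkAux (rothe w) n k) := by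
          rw [hstep]
          exact darkStep_eq_of _ _ _ _ hcols hne
        refine ⟨hL' ▸ iR_sorted inv1 x hdist, ?_, ?_, ?_, ?_, ?_⟩
        · -- inv2
          intro a ha
          rw [hL'] at ha
          rw [hV]
          rcases iR_mem L x a ha with h1 | h1
          · exact Finset.mem_insert_of_mem (inv2 a h1)
          · subst h1; exact Finset.mem_insert_self x _
        · -- inv3
          intro a ha
          rw [hL'] at ha
          rcases iR_mem L x a ha with h1 | h1
          · obtain ⟨j, hj1, hj2, hj3⟩ := inv3 a h1
            refine ⟨j, by omega, hj2, ?_⟩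
            rw [hL', iR_countP_mem inv1 hdist h1]
            exact hj3
          · subst h1
            refine ⟨p, by omega, rfl, ?_⟩
            rw [hL', iR_countP_ge inv1 hdist]
            set t := L.countP (fun b => decide (x < b)) with ht_def
            by_cases ht : t = 0
            · rw [ht]
              exact IncFrom.one p
            · have htpos : 0 < t := Nat.pos_of_ne_zero ht
              have hS₀ : (L.toFinset.filter (fun b => x < b)).Nonempty := by
                obtain ⟨b, hb, hbx⟩ := countP_pos_iff.mp htpos
                exact ⟨b, Finset.mem_filter.mpr ⟨List.mem_toFinset.mpr hb, by simpa using hbx⟩⟩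
              set a₀ := (L.toFinset.filter (fun b => x < b)).min' hS₀ with ha₀_def
              have ha₀mem : a₀ ∈ L.toFinset.filter (fun b => x < b) := Finset.min'_mem _ hS₀
              have ha₀L : a₀ ∈ L := List.mem_toFinset.mp (Finset.mem_filter.mp ha₀mem).1
              have hxa₀ : x < a₀ := by simpa using (Finset.mem_filter.mp ha₀mem).2
              obtain ⟨j₀, hj₀1, hj₀2, hj₀3⟩ := inv3 a₀ ha₀L
              have hcnt : t ≤ L.countP (fun b => decide (a₀ ≤ b)) := by
                apply List.countP_mono_left
                intro b hb hbx
                simp only [decide_eq_true_eq] at hbx ⊢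
                exact Finset.min'_le _ b
                  (Finset.mem_filter.mpr ⟨List.mem_toFinset.mpr hb, by simpa using hbx⟩)
              have hj₀t : IncFrom w j₀ t := (hj₀3).mono hcnt
              have hpj₀ : p < j₀ := by rw [Fin.lt_def, hpv]; omega
              have hwpj₀ : w p < w j₀ := by rw [Fin.lt_def]; omega
              exact hj₀t.prepend hpj₀ hwpj₀
        · -- inv4
          intro j hj ℓ hInc
          by_cases hcase : n - k ≤ (j : ℕ)
          · calc ℓ ≤ L.countP (fun b => decide ((w j : ℕ) + 1 ≤ b)) := inv4 j hcase ℓ hInc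
              _ ≤ _ := by rw [hL']; exact iR_countP_le L x _
          · have hjp : j = p := Fin.ext (by omega)
            have hxj : (w j : ℕ) + 1 = x := by rw [hjp]
            rw [hL', hxj, iR_countP_ge inv1 hdist]
            set t := L.countP (fun b => decide (x < b)) with ht_def
            by_cases hℓ : ℓ ≤ 1
            · omega
            · obtain ⟨s, hjs, hall, hinc, hcard⟩ := hInc
              have hcard2 : 2 ≤ s.card := le_trans (by omega) hcard
              set s' := s.erase j with hs'_def
              have hcard' : s'.card = s.card - 1 := Finset.card_erase_of_mem hjs
              have hs'ne : s'.Nonempty := Finset.card_pos.mp (by omega)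
              set j₁ := s'.min' hs'ne with hj₁_def
              have hj₁s' : j₁ ∈ s' := Finset.min'_mem _ hs'ne
              have hj₁s : j₁ ∈ s := Finset.mem_of_mem_erase hj₁s'
              have hj₁j : j < j₁ :=
                lt_of_le_of_ne (hall j₁ hj₁s) (Ne.symm (Finset.ne_of_mem_erase hj₁s'))
              have hwj₁ : w j < w j₁ := hinc j hjs j₁ hj₁s hj₁j
              have hInc' : IncFrom w j₁ (ℓ - 1) := by
                refine ⟨s', hj₁s', fun i hi => Finset.min'_le _ i hi, ?_, by omega⟩
                intro i hi i' hi' hii'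
                exact hinc i (Finset.mem_of_mem_erase hi) i' (Finset.mem_of_mem_erase hi') hii'
              have hj₁big : n - k ≤ (j₁ : ℕ) := by
                have := hj₁j
                rw [Fin.lt_def] at this
                omega
              have h1 : ℓ - 1 ≤ L.countP (fun b => decide ((w j₁ : ℕ) + 1 ≤ b)) :=
                inv4 j₁ hj₁big (ℓ - 1) hInc'
              have h2 : L.countP (fun b => decide ((w j₁ : ℕ) + 1 ≤ b)) ≤ t := by
                apply List.countP_mono_left
                intro b hb hbx
                simp only [decide_eq_true_eq] at hbx ⊢
                have : (w j : ℕ) < (w j₁ : ℕ) := hwj₁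
                omega
              omega
        · -- inv5
          rw [hS', Finset.image_insert]
          rw [inv5, hV, hL', hLset']
          ext a
          simp only [Finset.mem_insert, Finset.mem_sdiff, List.mem_toFinset, Finset.mem_insert,
            Finset.mem_erase, List.mem_toFinset]
          constructor
          · rintro (h1 | ⟨h1, h2⟩)
            · subst h1
              refine ⟨Or.inr (inv2 m hmL), ?_⟩
              rintro (h3 | ⟨h3, _⟩)
              · exact absurd (h3 ▸ hmx) (lt_irrefl _)
              · exact h3 rfl
            · refine ⟨Or.inr h1, ?_⟩
              rintro (h3 | ⟨_, h4⟩)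
              · exact hxV (h3 ▸ h1)
              · exact h2 h4
          · rintro ⟨h1, h2⟩
            rcases h1 with h1 | h1
            · exact absurd (Or.inl h1) h2
            · by_cases h3 : a = m
              · exact Or.inl h3
              · refine Or.inr ⟨h1, fun h4 => h2 (Or.inr ⟨h3, h4⟩)⟩
        · -- inv6
          intro q hq
          rw [hS'] at hq
          rcases Finset.mem_insert.mp hq with h1 | h1
          · rw [h1]
            show n - (k + 1) < n - k
            omega
          · have := inv6 q h1; omega
      · -- append case
        push_neg at hbig
        have hnone : ∀ b ∈ L, ¬ b < x := fun b hb => not_lt.mpr (hbig b hb)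
        have happ : insertRow L x = (L ++ [x], none) := iR_append x hnone
        have hS' : darkAux (rothe w) n (k + 1) = darkAux (rothe w) n k := by
          rw [hstep]
          refine darkStep_eq_of_empty _ _ _ ?_
          rw [hcols, Finset.filter_eq_empty_iff]
          intro b hb
          simpa using hnone b (List.mem_toFinset.mp hb)
        have hL'eq : rowOneAux w (k + 1) = L ++ [x] := by rw [hL', happ]
        refine ⟨hL' ▸ iR_sorted inv1 x hdist, ?_, ?_, ?_, ?_, ?_⟩
        · intro a ha
          rw [hL'] at ha
          rw [hV]
          rcases iR_mem L x a ha with h1 | h1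
          · exact Finset.mem_insert_of_mem (inv2 a h1)
          · subst h1; exact Finset.mem_insert_self x _
        · intro a ha
          rw [hL'] at ha
          rcases iR_mem L x a ha with h1 | h1
          · obtain ⟨j, hj1, hj2, hj3⟩ := inv3 a h1
            refine ⟨j, by omega, hj2, ?_⟩
            rw [hL', iR_countP_mem inv1 hdist h1]
            exact hj3
          · subst h1
            refine ⟨p, by omega, rfl, ?_⟩
            rw [hL', iR_countP_ge inv1 hdist]
            have ht : L.countP (fun b => decide (x < b)) = L.countP (fun b => decide (x < b)) := rfl
            set t := L.countP (fun b => decide (x < b)) with ht_def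
            by_cases htz : t = 0
            · rw [htz]; exact IncFrom.one p
            · have htpos : 0 < t := Nat.pos_of_ne_zero htz
              have hS₀ : (L.toFinset.filter (fun b => x < b)).Nonempty := by
                obtain ⟨b, hb, hbx⟩ := countP_pos_iff.mp htpos
                exact ⟨b, Finset.mem_filter.mpr ⟨List.mem_toFinset.mpr hb, by simpa using hbx⟩⟩
              set a₀ := (L.toFinset.filter (fun b => x < b)).min' hS₀ with ha₀_def
              have ha₀mem : a₀ ∈ L.toFinset.filter (fun b => x < b) := Finset.min'_mem _ hS₀
              have ha₀L : a₀ ∈ L := List.mem_toFinset.mp (Finset.mem_filter.mp ha₀mem).1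
              have hxa₀ : x < a₀ := by simpa using (Finset.mem_filter.mp ha₀mem).2
              obtain ⟨j₀, hj₀1, hj₀2, hj₀3⟩ := inv3 a₀ ha₀L
              have hcnt : t ≤ L.countP (fun b => decide (a₀ ≤ b)) := by
                apply List.countP_mono_left
                intro b hb hbx
                simp only [decide_eq_true_eq] at hbx ⊢
                exact Finset.min'_le _ b
                  (Finset.mem_filter.mpr ⟨List.mem_toFinset.mpr hb, by simpa using hbx⟩)
              have hj₀t : IncFrom w j₀ t := (hj₀3).mono hcnt
              have hpj₀ : p < j₀ := by rw [Fin.lt_def, hpv]; omega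
              have hwpj₀ : w p < w j₀ := by rw [Fin.lt_def]; omega
              exact hj₀t.prepend hpj₀ hwpj₀
        · intro j hj ℓ hInc
          by_cases hcase : n - k ≤ (j : ℕ)
          · calc ℓ ≤ L.countP (fun b => decide ((w j : ℕ) + 1 ≤ b)) := inv4 j hcase ℓ hInc
              _ ≤ _ := by rw [hL']; exact iR_countP_le L x _
          · have hjp : j = p := Fin.ext (by omega)
            have hxj : (w j : ℕ) + 1 = x := by rw [hjp]
            rw [hL', hxj, iR_countP_ge inv1 hdist]
            set t := L.countP (fun b => decide (x < b)) with ht_def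
            by_cases hℓ : ℓ ≤ 1
            · omega
            · obtain ⟨s, hjs, hall, hinc, hcard⟩ := hInc
              have hcard2 : 2 ≤ s.card := le_trans (by omega) hcard
              set s' := s.erase j with hs'_def
              have hcard' : s'.card = s.card - 1 := Finset.card_erase_of_mem hjs
              have hs'ne : s'.Nonempty := Finset.card_pos.mp (by omega)
              set j₁ := s'.min' hs'ne with hj₁_def
              have hj₁s' : j₁ ∈ s' := Finset.min'_mem _ hs'ne
              have hj₁s : j₁ ∈ s := Finset.mem_of_mem_erase hj₁s'
              have hj₁j : j < j₁ :=
                lt_of_le_of_ne (hall j₁ hj₁s) (Ne.symm (Finset.ne_of_mem_erase hj₁s'))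
              have hwj₁ : w j < w j₁ := hinc j hjs j₁ hj₁s hj₁j
              have hInc' : IncFrom w j₁ (ℓ - 1) := by
                refine ⟨s', hj₁s', fun i hi => Finset.min'_le _ i hi, ?_, by omega⟩
                intro i hi i' hi' hii'
                exact hinc i (Finset.mem_of_mem_erase hi) i' (Finset.mem_of_mem_erase hi') hii'
              have hj₁big : n - k ≤ (j₁ : ℕ) := by
                have := hj₁j
                rw [Fin.lt_def] at this
                omega
              have h1 : ℓ - 1 ≤ L.countP (fun b => decide ((w j₁ : ℕ) + 1 ≤ b)) :=
                inv4 j₁ hj₁big (ℓ - 1) hInc'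
              have h2 : L.countP (fun b => decide ((w j₁ : ℕ) + 1 ≤ b)) ≤ t := by
                apply List.countP_mono_left
                intro b hb hbx
                simp only [decide_eq_true_eq] at hbx ⊢
                have : (w j : ℕ) < (w j₁ : ℕ) := hwj₁
                omega
              omega
        · rw [hS', inv5, hV, hL'eq]
          ext a
          simp only [Finset.mem_sdiff, List.mem_toFinset, Finset.mem_insert, List.toFinset_append,
            Finset.mem_union, List.toFinset_cons, List.toFinset_nil, insert_empty_eq,
            Finset.mem_singleton, List.mem_toFinset]
          constructor
          · rintro ⟨h1, h2⟩
            exact ⟨Or.inr h1, by rintro (h3 | h3); exact h2 h3; exact hxV (h3 ▸ h1)⟩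
          · rintro ⟨h1, h2⟩
            rcases h1 with h1 | h1
            · exact absurd (Or.inr h1) h2
            · exact ⟨h1, fun h3 => h2 (Or.inl h3)⟩
        · intro q hq
          rw [hS'] at hq
          have := inv6 q hq
          omega


lemma subset_darkStep (D S : Finset (ℕ × ℕ)) (r : ℕ) : S ⊆ darkStep D S r := by
  rw [darkStep_eq]
  split_ifs with h
  · exact Finset.subset_insert _ _
  · exact subset_rfl

lemma mem_darkStep (D S : Finset (ℕ × ℕ)) (r : ℕ) {p : ℕ × ℕ} (hp : p ∈ darkStep D S r) :
    p ∈ S ∨ p.1 = r := by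
  rw [darkStep_eq] at hp
  split_ifs at hp with h
  · rcases Finset.mem_insert.mp hp with h1 | h1
    · exact Or.inr (by rw [h1])
    · exact Or.inl h1
  · exact Or.inl hp

lemma darkAux_mono_rows (D : Finset (ℕ × ℕ)) (N : ℕ) :
    ∀ k k', k ≤ k' → ∀ p ∈ darkAux D N k', p ∈ darkAux D N k ∨ p.1 ≤ N - k := by
  intro k k' hkk'
  induction k' with
  | zero =>
      intro p hp
      interval_cases k
      exact Or.inl hp
  | succ k' ih =>
      intro p hp
      by_cases hk : k = k' + 1
      · subst hk; exact Or.inl hp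
      · have hle : k ≤ k' := by omega
        rcases mem_darkStep D (darkAux D N k') (N - k') hp with h1 | h1
        · exact ih hle p h1
        · exact Or.inr (by omega)

lemma darkAux_sub (D : Finset (ℕ × ℕ)) (N : ℕ) :
    ∀ k k', k ≤ k' → darkAux D N k ⊆ darkAux D N k' := by
  intro k k' hkk'
  induction k' with
  | zero => interval_cases k; exact subset_rfl
  | succ k' ih =>
      by_cases hk : k = k' + 1
      · subst hk; exact subset_rfl
      · exact subset_trans (ih (by omega)) (subset_darkStep D _ _)

lemma darkAux_zero_of_big (D : Finset (ℕ × ℕ)) {N M : ℕ} (hNM : N ≤ M)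
    (hD : ∀ p ∈ D, p.1 ≤ N) : ∀ i, i ≤ M - N → darkAux D M i = ∅ := by
  intro i
  induction i with
  | zero => intro _; rfl
  | succ i ih =>
      intro hi
      have h1 : darkAux D M (i + 1) = darkStep D (darkAux D M i) (M - i) := rfl
      rw [h1, ih (by omega)]
      refine darkStep_eq_of_empty _ _ _ ?_
      rw [Finset.image_eq_empty, Finset.filter_eq_empty_iff]
      rintro p hp ⟨hp1, _⟩
      have := hD p hp
      omega

lemma darkAux_shift (D : Finset (ℕ × ℕ)) {N M : ℕ} (hNM : N ≤ M)
    (hD : ∀ p ∈ D, p.1 ≤ N) : ∀ j, j ≤ N → darkAux D M (M - N + j) = darkAux D N j := by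
  intro j
  induction j with
  | zero =>
      intro _
      rw [Nat.add_zero]
      exact darkAux_zero_of_big D hNM hD _ le_rfl
  | succ j ih =>
      intro hj
      have h1 : M - N + (j + 1) = (M - N + j) + 1 := by omega
      rw [h1]
      show darkStep D (darkAux D M (M - N + j)) (M - (M - N + j)) = _
      rw [ih (by omega), (by omega : M - (M - N + j) = N - j)]
      rfl

lemma dark_eq_darkAux {D : Finset (ℕ × ℕ)} {M : ℕ} (hD : ∀ p ∈ D, p.1 ≤ M) :
    dark D = darkAux D M M := by
  have hrb : ∀ p ∈ D, p.1 ≤ rowBound D := by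
    intro p hp
    exact Finset.le_sup (f := id) (Finset.mem_image_of_mem Prod.fst hp)
  have hNM : rowBound D ≤ M := by
    refine Finset.sup_le ?_
    intro b hb
    obtain ⟨p, hp, hpb⟩ := Finset.mem_image.mp hb
    exact hpb ▸ hD p hp
  rw [dark, ← darkAux_shift D hNM hrb (rowBound D) le_rfl,
    Nat.sub_add_cancel hNM]

variable {n : ℕ}

lemma LISfrom_eq (w : Equiv.Perm (Fin n)) (r : Fin n) :
    LISfrom w r = (rowOneAux w (n - r)).countP (fun b => decide ((w r : ℕ) + 1 ≤ b)) := by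
  obtain ⟨_, _, inv3, inv4, _, _⟩ := master w (n - r) (by omega)
  have hrn : (r : ℕ) < n := r.isLt
  have hnn : n - (n - (r : ℕ)) = (r : ℕ) := by omega
  have hxmem : (w r : ℕ) + 1 ∈ rowOneAux w (n - r) := by
    have h1 : n - (r : ℕ) = (n - 1 - r) + 1 := by omega
    rw [h1, rowOneAux]
    have h2 : n - 1 - (n - 1 - (r : ℕ)) = (r : ℕ) := by omega
    rw [h2, oneline, dif_pos hrn]
    have : (⟨(r : ℕ), hrn⟩ : Fin n) = r := Fin.ext rfl
    rw [this]
    exact iR_self_mem _ _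
  apply le_antisymm
  · refine Finset.sup_le ?_
    intro s hs
    obtain ⟨hrs, hall, hinc⟩ := Finset.mem_filter.mp hs |>.2
    exact inv4 r (by omega) s.card ⟨s, hrs, hall, hinc, le_rfl⟩
  · obtain ⟨j, hj1, hj2, hj3⟩ := inv3 _ hxmem
    have hjr : j = r := by
      have : w j = w r := Fin.ext (by omega)
      exact w.injective this
    subst hjr
    obtain ⟨s, h1, h2, h3, h4⟩ := hj3
    refine le_trans h4 ?_
    exact Finset.le_sup (f := Finset.card)
      (Finset.mem_filter.mpr ⟨Finset.mem_univ s, h1, h2, h3⟩)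

lemma LISfrom_pos (w : Equiv.Perm (Fin n)) (r : Fin n) : 1 ≤ LISfrom w r := by
  refine le_trans ?_ (Finset.le_sup (f := Finset.card)
    (Finset.mem_filter.mpr ⟨Finset.mem_univ {r}, Finset.mem_singleton_self r, by simp, by simp⟩))
  simp

end Aux11

/-- `rajcode(RD(w))_r = n + 1 - r - LIS^w(w(r))` for `r ∈ [n]`
(here `r ∈ [n]` corresponds to `(r : Fin n)`, row `r+1` in 1-based terms). -/
theorem rajcodeD_rothe (n : ℕ) (w : Equiv.Perm (Fin n)) (r : Fin n) :
    (rajcodeD (rothe w) ((r : ℕ) + 1) : ℤ)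
      = (n : ℤ) + 1 - ((r : ℕ) + 1) - LISfrom w r := by
  classical
  open Aux11 in
  have hrn : (r : ℕ) < n := r.isLt
  set k₀ : ℕ := n - (r : ℕ) with hk₀
  obtain ⟨inv1, inv2, inv3, inv4, inv5, inv6⟩ := master w k₀ (by omega)
  set x : ℕ := (w r : ℕ) + 1 with hx
  set L : List ℕ := rowOneAux w k₀ with hL
  set D : Finset (ℕ × ℕ) := rothe w with hD
  set S : Finset (ℕ × ℕ) := darkAux D n k₀ with hS
  have hnk₀ : n - k₀ = (r : ℕ) := by omega
  have hdark : dark D = darkAux D n n := dark_eq_darkAux (fun p hp => rothe_row_le w hp)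
  have hLsub : ∀ a ∈ L.toFinset.filter (fun b => x ≤ b), a ∈ Vset w k₀ := by
    intro a ha
    exact inv2 a (List.mem_toFinset.mp (Finset.mem_filter.mp ha).1)
  -- the set of columns in row r+1 of the snow diagram
  have hcolset : ((snow D).filter fun p => p.1 = (r : ℕ) + 1).image Prod.snd
      = Vset w k₀ \ (L.toFinset.filter (fun b => x ≤ b)) := by
    ext a
    simp only [Finset.mem_image, Finset.mem_filter, Finset.mem_sdiff, List.mem_toFinset]
    constructor
    · rintro ⟨p, ⟨hpsnow, hp1⟩, hp2⟩
      have hpeq : p = ((r : ℕ) + 1, a) := Prod.ext hp1 hp2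
      rw [hpeq] at hpsnow
      rcases Finset.mem_union.mp hpsnow with hmem | hmem
      · obtain ⟨j, hrj, hwj, haj⟩ := (mem_rothe_iff w r a).mp hmem
        have hjr : (r : ℕ) < (j : ℕ) := hrj
        refine ⟨mem_Vset.mpr ⟨j, by omega, haj.symm⟩, ?_⟩
        rintro ⟨-, hxa⟩
        have : (w j : ℕ) < (w r : ℕ) := hwj
        omega
      · obtain ⟨q, hq, hq2⟩ := Finset.mem_biUnion.mp hmem
        obtain ⟨i, hi, hieq⟩ := Finset.mem_image.mp hq2
        have hq2a : q.2 = a := by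
          have := congrArg Prod.snd hieq; simpa using this
        have hqrow : (r : ℕ) + 1 ≤ q.1 := by
          have h1 : i = (r : ℕ) + 1 := by
            have := congrArg Prod.fst hieq; simpa using this
          have := Finset.mem_Icc.mp hi
          omega
        have hqS : q ∈ S := by
          rw [hdark] at hq
          rcases darkAux_mono_rows D n k₀ n (by omega) q hq with h1 | h1
          · exact h1
          · omega
        have haim : a ∈ S.image Prod.snd := Finset.mem_image.mpr ⟨q, hqS, hq2a⟩
        rw [inv5] at haim
        obtain ⟨h1, h2⟩ := Finset.mem_sdiff.mp haim
        exact ⟨h1, fun h => h2 (List.mem_toFinset.mpr h.1)⟩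
    · rintro ⟨haV, hnot⟩
      by_cases haL : a ∈ L
      · have hax : a < x := by
          by_contra h
          exact hnot ⟨haL, not_lt.mp h⟩
        obtain ⟨j, hj1, hj2⟩ := mem_Vset.mp haV
        have hwjr : (w j : ℕ) < (w r : ℕ) := by omega
        have hjne : j ≠ r := fun h => by rw [h] at hwjr; omega
        have hrj : r < j := by
          rw [Fin.lt_def]
          have : (r : ℕ) ≤ (j : ℕ) := by omega
          exact lt_of_le_of_ne this (fun h => hjne (Fin.ext h.symm))
        refine ⟨((r : ℕ) + 1, a), ⟨?_, rfl⟩, rfl⟩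
        refine Finset.mem_union_left _ ?_
        exact (mem_rothe_iff w r a).mpr ⟨j, hrj, by rw [Fin.lt_def]; omega, hj2.symm⟩
      · have haim : a ∈ S.image Prod.snd := by
          rw [inv5]
          exact Finset.mem_sdiff.mpr ⟨haV, fun h => haL (List.mem_toFinset.mp h)⟩
        obtain ⟨q, hqS, hqa⟩ := Finset.mem_image.mp haim
        have hqdark : q ∈ dark D := by
          rw [hdark]
          exact darkAux_sub D n k₀ n (by omega) hqS
        have hqrow : (r : ℕ) < q.1 := hnk₀ ▸ inv6 q hqS
        refine ⟨((r : ℕ) + 1, a), ⟨?_, rfl⟩, rfl⟩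
        refine Finset.mem_union_right _ ?_
        refine Finset.mem_biUnion.mpr ⟨q, hqdark, ?_⟩
        refine Finset.mem_image.mpr ⟨(r : ℕ) + 1, Finset.mem_Icc.mpr ⟨by omega, by omega⟩, ?_⟩
        rw [hqa]
    -- cardinality computations
  have hinj : Set.InjOn Prod.snd ((((snow D).filter fun p => p.1 = (r : ℕ) + 1) : Finset (ℕ × ℕ)) : Set (ℕ × ℕ)) := by
    intro p hp q hq hpq
    rw [Finset.mem_coe] at hp hq
    have hp1 := (Finset.mem_filter.mp hp).2
    have hq1 := (Finset.mem_filter.mp hq).2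
    exact Prod.ext (by rw [hp1, hq1]) hpq
  have hcard1 : rajcodeD (rothe w) ((r : ℕ) + 1)
      = (Vset w k₀ \ (L.toFinset.filter (fun b => x ≤ b))).card := by
    rw [rajcodeD, ← Finset.card_image_of_injOn hinj, hcolset]
  have hVcard : (Vset w k₀).card = n - (r : ℕ) := by
    have hVeq : Vset w k₀ = (Finset.Ici r).image (fun j : Fin n => (w j : ℕ) + 1) := by
      ext a
      rw [mem_Vset]
      simp only [Finset.mem_image, Finset.mem_Ici]
      constructor
      · rintro ⟨j, hj1, hj2⟩
        exact ⟨j, by rw [Fin.le_def]; omega, hj2⟩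
      · rintro ⟨j, hj1, hj2⟩
        rw [Fin.le_def] at hj1
        exact ⟨j, by omega, hj2⟩
    rw [hVeq, Finset.card_image_of_injOn (fun i _ j _ h => by
      exact w.injective (Fin.ext (by omega)))]
    exact Fin.card_Ici r
  have hLIS : (L.toFinset.filter (fun b => x ≤ b)).card = LISfrom w r := by
    rw [LISfrom_eq]
    have : (L.toFinset.filter (fun b => x ≤ b))
        = (L.filter (fun b => decide (x ≤ b))).toFinset := by
      rw [List.toFinset_filter]
      exact Finset.filter_congr fun a _ => by simp
    rw [this, List.toFinset_card_of_nodup (inv1.nodup.filter _),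
      ← List.countP_eq_length_filter]
  have hsub : (L.toFinset.filter (fun b => x ≤ b)) ⊆ Vset w k₀ := hLsub
  have hcard2 : rajcodeD (rothe w) ((r : ℕ) + 1) = (n - (r : ℕ)) - LISfrom w r := by
    rw [hcard1, Finset.card_sdiff_of_subset hsub, hVcard, hLIS]
  have hLISle : LISfrom w r ≤ n - (r : ℕ) := by
    rw [← hLIS, ← hVcard]
    exact Finset.card_le_card hsub
  have hpos := LISfrom_pos w r
  rw [hcard2]
  omega

end
end
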